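/- Φ is a bijection from U × (k^×)^d onto U∨ × (k^×)^d, and its inverse is the map ξ ↦ (−1)^d · R∨(ξ)^{−2} · Φ∨(ξ), where the scalar (−1)^d · R∨(ξ)^{−2} multiplies all n + d coordinates of Φ∨(ξ) simultaneously. (Paper's Lemma 3, stated at the level of the explicit gradient formulas.) -/

import Mathlib

open Finset

/-- Lemma 3: the gradient map `Φ(x,t) = (R(x,t)·F(x), -R(x,t)/t₁, …, -R(x,t)/t_d)`
with `R(x,t) = f(x)/(t₁⋯t_d)` is a bijection from `U × (k^×)^d` onto `U∨ × (k^×)^d`,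
with inverse `ξ ↦ (-1)^d · R∨(ξ)⁻² · Φ∨(ξ)` (the scalar multiplying all `n + d`
coordinates simultaneously). -/
theorem lemma3_gradient_bijection
    {k : Type*} [Field k] {n d : ℕ} (hn : 1 ≤ n) (hd : 1 ≤ d)
    (U Ud : Set (Fin n → k))
    (f fd : (Fin n → k) → k) (F Fd : (Fin n → k) → (Fin n → k))
    (hUstab : ∀ c : k, c ≠ 0 → ∀ x ∈ U, c • x ∈ U)
    (hUdstab : ∀ c : k, c ≠ 0 → ∀ ξ ∈ Ud, c • ξ ∈ Ud)
    (hf0 : ∀ x ∈ U, f x ≠ 0) (hfd0 : ∀ ξ ∈ Ud, fd ξ ≠ 0)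
    (hFmem : ∀ x ∈ U, F x ∈ Ud) (hFdmem : ∀ ξ ∈ Ud, Fd ξ ∈ U)
    (hFdF : ∀ x ∈ U, Fd (F x) = x) (hFFd : ∀ ξ ∈ Ud, F (Fd ξ) = ξ)
    (hnorm : ∀ x ∈ U, fd (F x) = (f x)⁻¹)
    (hnormd : ∀ ξ ∈ Ud, f (Fd ξ) = (fd ξ)⁻¹)
    (hfhom : ∀ c : k, c ≠ 0 → ∀ x ∈ U, f (c • x) = c ^ d * f x)
    (hFhom : ∀ c : k, c ≠ 0 → ∀ x ∈ U, F (c • x) = c⁻¹ • F x)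
    (hfdhom : ∀ c : k, c ≠ 0 → ∀ ξ ∈ Ud, fd (c • ξ) = c ^ d * fd ξ)
    (hFdhom : ∀ c : k, c ≠ 0 → ∀ ξ ∈ Ud, Fd (c • ξ) = c⁻¹ • Fd ξ)
    (R Rd : (Fin n → k) × (Fin d → k) → k)
    (hR : ∀ x t, R (x, t) = f x / ∏ i, t i)
    (hRd : ∀ ξ t, Rd (ξ, t) = fd ξ / ∏ i, t i)
    (Φ Φd : (Fin n → k) × (Fin d → k) → (Fin n → k) × (Fin d → k))
    (hΦ : ∀ x t, Φ (x, t) = (R (x, t) • F x, fun i => -R (x, t) / t i))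
    (hΦd : ∀ ξ t, Φd (ξ, t) = (Rd (ξ, t) • Fd ξ, fun i => -Rd (ξ, t) / t i))
    (D Dd : Set ((Fin n → k) × (Fin d → k)))
    (hD : D = {y | y.1 ∈ U ∧ ∀ i, y.2 i ≠ 0})
    (hDd : Dd = {ξ | ξ.1 ∈ Ud ∧ ∀ i, ξ.2 i ≠ 0}) :
    Set.BijOn Φ D Dd ∧
    (∀ ξ ∈ Dd, (((-1 : k) ^ d * ((Rd ξ) ^ 2)⁻¹) • Φd ξ) ∈ D ∧
      Φ (((-1 : k) ^ d * ((Rd ξ) ^ 2)⁻¹) • Φd ξ) = ξ) ∧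
    (∀ y ∈ D, ((-1 : k) ^ d * ((Rd (Φ y)) ^ 2)⁻¹) • Φd (Φ y) = y) := by
  subst hD hDd
  obtain ⟨e, he⟩ : ∃ e : k, e = (-1 : k) ^ d := ⟨_, rfl⟩
  have he2 : e * e = 1 := by
    rw [he, ← pow_add, ← two_mul, pow_mul]; norm_num
  have he0 : e ≠ 0 := by
    intro h; rw [h, zero_mul] at he2; exact zero_ne_one he2
  rw [← he]
  -- forward direction with left inverse
  have key1 : ∀ y ∈ ({y | y.1 ∈ U ∧ ∀ i, y.2 i ≠ 0} :
      Set ((Fin n → k) × (Fin d → k))),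
      Φ y ∈ ({ξ | ξ.1 ∈ Ud ∧ ∀ i, ξ.2 i ≠ 0} :
        Set ((Fin n → k) × (Fin d → k))) ∧
      ((e * ((Rd (Φ y)) ^ 2)⁻¹) • Φd (Φ y)) = y := by
    rintro ⟨x, t⟩ ⟨hx, ht⟩
    simp only at hx ht
    have hprod : (∏ i, t i) ≠ 0 := Finset.prod_ne_zero_iff.2 fun i _ => ht i
    obtain ⟨r, hrdef⟩ : ∃ r : k, r = f x / ∏ i, t i := ⟨_, rfl⟩
    have hr0 : r ≠ 0 := hrdef ▸ div_ne_zero (hf0 x hx) hprod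
    have hfx : f x = r * ∏ i, t i := by rw [hrdef]; field_simp
    have hΦxt : Φ (x, t) = (r • F x, fun i => -r / t i) := by
      rw [hΦ, hR, ← hrdef]
    have hmem1 : r • F x ∈ Ud := hUdstab r hr0 _ (hFmem x hx)
    have hti : ∀ i, (-r / t i) ≠ 0 := fun i =>
      div_ne_zero (neg_ne_zero.2 hr0) (ht i)
    have hprodt : (∏ i, (-r / t i)) = e * r ^ d / ∏ i, t i := by
      rw [Finset.prod_div_distrib, Finset.prod_const, card_univ,
        Fintype.card_fin, neg_pow, ← he]
    have hrd : r ^ d ≠ 0 := pow_ne_zero _ hr0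
    have hRdΦ : Rd (Φ (x, t)) = e * r⁻¹ := by
      rw [hΦxt, hRd, hfdhom r hr0 _ (hFmem x hx), hnorm x hx, hprodt, hfx]
      field_simp
      linear_combination (-1 : k) * he2
    have hFdΦ : Fd (r • F x) = r⁻¹ • x := by
      rw [hFdhom r hr0 _ (hFmem x hx), hFdF x hx]
    refine ⟨⟨by simpa [hΦxt] using hmem1, by simpa [hΦxt] using hti⟩, ?_⟩
    have hΦdΦ : Φd (Φ (x, t)) =
        ((Rd (Φ (x, t)) * r⁻¹) • x, fun i => -Rd (Φ (x, t)) / (-r / t i)) := by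
      conv_lhs => rw [hΦxt, hΦd]
      rw [← hΦxt, hFdΦ, smul_smul]
    rw [hΦdΦ, hRdΦ]
    have hc1 : (e * ((e * r⁻¹) ^ 2)⁻¹) * (e * r⁻¹ * r⁻¹) = 1 := by
      field_simp
    refine Prod.ext ?_ ?_
    · show ((e * ((e * r⁻¹) ^ 2)⁻¹) • ((e * r⁻¹ * r⁻¹) • x)) = x
      rw [smul_smul, hc1, one_smul]
    · funext i
      show (e * ((e * r⁻¹) ^ 2)⁻¹) * (-(e * r⁻¹) / (-r / t i)) = t i
      field_simp
  -- backward direction with right inverse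
  have key2 : ∀ ξ ∈ ({ξ | ξ.1 ∈ Ud ∧ ∀ i, ξ.2 i ≠ 0} :
      Set ((Fin n → k) × (Fin d → k))),
      ((e * ((Rd ξ) ^ 2)⁻¹) • Φd ξ) ∈
        ({y | y.1 ∈ U ∧ ∀ i, y.2 i ≠ 0} :
          Set ((Fin n → k) × (Fin d → k))) ∧
      Φ ((e * ((Rd ξ) ^ 2)⁻¹) • Φd ξ) = ξ := by
    rintro ⟨y, s⟩ ⟨hy, hs⟩
    simp only at hy hs
    have hprod : (∏ i, s i) ≠ 0 := Finset.prod_ne_zero_iff.2 fun i _ => hs i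
    obtain ⟨ρ, hρdef⟩ : ∃ ρ : k, ρ = fd y / ∏ i, s i := ⟨_, rfl⟩
    have hρ0 : ρ ≠ 0 := hρdef ▸ div_ne_zero (hfd0 y hy) hprod
    have hfdy : fd y = ρ * ∏ i, s i := by rw [hρdef]; field_simp
    have hRdys : Rd (y, s) = ρ := by rw [hRd, ← hρdef]
    obtain ⟨c, hcdef⟩ : ∃ c : k, c = e * (ρ ^ 2)⁻¹ := ⟨_, rfl⟩
    have hc0 : c ≠ 0 :=
      hcdef ▸ mul_ne_zero he0 (inv_ne_zero (pow_ne_zero _ hρ0))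
    have hcρ0 : c * ρ ≠ 0 := mul_ne_zero hc0 hρ0
    have hg : ((e * ((Rd (y, s)) ^ 2)⁻¹) • Φd (y, s)) =
        ((c * ρ) • Fd y, fun i => c * (-ρ / s i)) := by
      rw [hΦd, hRdys, ← hcdef, Prod.smul_mk, smul_smul]
      refine Prod.ext rfl ?_
      funext i
      simp only [Pi.smul_apply, smul_eq_mul]
    have hmemU : (c * ρ) • Fd y ∈ U := hUstab _ hcρ0 _ (hFdmem y hy)
    have hsi : ∀ i, c * (-ρ / s i) ≠ 0 := fun i =>
      mul_ne_zero hc0 (div_ne_zero (neg_ne_zero.2 hρ0) (hs i))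
    refine ⟨by rw [hg]; exact ⟨hmemU, hsi⟩, ?_⟩
    rw [hg, hΦ, hR]
    have hf1 : f ((c * ρ) • Fd y) = (c * ρ) ^ d * (fd y)⁻¹ := by
      rw [hfhom _ hcρ0 _ (hFdmem y hy), hnormd y hy]
    have hprods : (∏ i, (c * (-ρ / s i))) =
        e * (c * ρ) ^ d / ∏ i, s i := by
      have h1 : ∀ i : Fin d, c * (-ρ / s i) = (-(c * ρ)) / s i := fun i => by
        field_simp
      simp only [h1]
      rw [Finset.prod_div_distrib, Finset.prod_const, card_univ,
        Fintype.card_fin, neg_pow, ← he]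
    have hcρd : (c * ρ) ^ d ≠ 0 := pow_ne_zero _ hcρ0
    have hRval : f ((c * ρ) • Fd y) / (∏ i, (c * (-ρ / s i))) = e * ρ⁻¹ := by
      rw [hf1, hprods, hfdy]
      field_simp
      linear_combination (-1 : k) * he2
    rw [hRval]
    have hF1 : F ((c * ρ) • Fd y) = (c * ρ)⁻¹ • y := by
      rw [hFhom _ hcρ0 _ (hFdmem y hy), hFFd y hy]
    refine Prod.ext ?_ ?_
    · show (e * ρ⁻¹) • F ((c * ρ) • Fd y) = y
      rw [hF1, smul_smul]
      have h1 : (e * ρ⁻¹) * (c * ρ)⁻¹ = 1 := by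
        rw [hcdef]
        field_simp
      rw [h1, one_smul]
    · funext i
      show -(e * ρ⁻¹) / (c * (-ρ / s i)) = s i
      rw [hcdef]
      field_simp
  refine ⟨?_, fun ξ hξ => (key2 ξ hξ), fun y hy => (key1 y hy).2⟩
  exact Set.InvOn.bijOn ⟨fun y hy => (key1 y hy).2, fun ξ hξ => (key2 ξ hξ).2⟩
    (fun y hy => (key1 y hy).1) (fun ξ hξ => (key2 ξ hξ).1)
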